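/- Let N = (V,A,c) and N' = (V,A,c') be networks on a finite set V with |V| ≥ 2, and let x* ∈ V. Assume: (a) for every y ∈ V ∖ {x*}, c'(x*,y) ≥ c(x*,y) and c'(y,x*) ≤ c(y,x*); (b) for every arc (x,y) with x ≠ x* and y ≠ x*, c'(x,y) = c(x,y). Then for every y ∈ V ∖ {x*} with φ^N_{x*y} ≥ φ^N_{yx*}, one has φ^{N'}_{x*y} ≥ φ^{N'}_{yx*}. Moreover, for every y ∈ V ∖ {x*} with φ^N_{x*y} ≥ φ^N_{yx*} such that additionally φ^N_{x*y} > φ^N_{yx*}, or c'(x*,y) > c(x*,y), or c'(y,x*) < c(y,x*), one has φ^{N'}_{x*y} > φ^{N'}_{yx*}. -/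
import Mathlib


/-- A flow from `s` to `t` in the network with capacity `c`: bounded by the
capacity on every arc and conserving flow at every vertex other than `s`, `t`. -/
def IsFlow {V : Type*} [Fintype V] [DecidableEq V]
    (c : V → V → ℕ) (s t : V) (f : V → V → ℕ) : Prop :=
  (∀ x y : V, x ≠ y → f x y ≤ c x y) ∧
  ∀ x : V, x ≠ s → x ≠ t →
    ∑ y ∈ Finset.univ.erase x, f x y = ∑ y ∈ Finset.univ.erase x, f y x

/-- The value of a flow `f` from `s`: outflow of `s` minus inflow of `s`. -/
def flowValue {V : Type*} [Fintype V] [DecidableEq V]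
    (f : V → V → ℕ) (s : V) : ℤ :=
  (∑ y ∈ Finset.univ.erase s, (f s y : ℤ)) -
    ∑ y ∈ Finset.univ.erase s, (f y s : ℤ)

/-- The maximum flow value `φ_{st}` from `s` to `t` in the network `c`. -/
noncomputable def maxFlow {V : Type*} [Fintype V] [DecidableEq V]
    (c : V → V → ℕ) (s t : V) : ℕ :=
  sSup {n : ℕ | ∃ f : V → V → ℕ, IsFlow c s t f ∧ flowValue f s = (n : ℤ)}

/-- The flow relation `𝔉(N)`: `x ⪰ y` iff `x = y` or `x ≠ y` and `φ_{xy} ≥ φ_{yx}`. -/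
def FlowRel {V : Type*} [Fintype V] [DecidableEq V]
    (c : V → V → ℕ) (x y : V) : Prop :=
  x = y ∨ (x ≠ y ∧ maxFlow c y x ≤ maxFlow c x y)

/-- A relation is complete if any two elements are comparable. -/
def CompleteRel {V : Type*} (R : V → V → Prop) : Prop :=
  ∀ x y : V, R x y ∨ R y x

/-- The strict part `S(R)` of a relation `R`. -/
def StrictPart {V : Type*} (R : V → V → Prop) (x y : V) : Prop :=
  R x y ∧ ¬ R y x

/-- A relation is quasi-transitive if its strict part is transitive. -/
def QuasiTransitive {V : Type*} (R : V → V → Prop) : Prop :=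
  Transitive (StrictPart R)

/-- The outdegree of `x` in the network `c`. -/
def outdeg {V : Type*} [Fintype V] [DecidableEq V] (c : V → V → ℕ) (x : V) : ℕ :=
  ∑ y ∈ Finset.univ.erase x, c x y

/-- The indegree of `x` in the network `c`. -/
def indeg {V : Type*} [Fintype V] [DecidableEq V] (c : V → V → ℕ) (x : V) : ℕ :=
  ∑ y ∈ Finset.univ.erase x, c y x

section Aux
open Finset

variable {V : Type*} [Fintype V] [DecidableEq V]

section Basic

lemma isFlow_zero (c : V → V → ℕ) (s t : V) : IsFlow c s t (fun _ _ => 0) :=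
  ⟨fun _ _ _ => Nat.zero_le _, fun _ _ _ => by simp⟩

lemma zero_mem_flowSet (c : V → V → ℕ) (s t : V) :
    0 ∈ {n : ℕ | ∃ f : V → V → ℕ, IsFlow c s t f ∧ flowValue f s = (n : ℤ)} :=
  ⟨fun _ _ => 0, isFlow_zero c s t, by simp [flowValue]⟩

lemma bddAbove_flowSet (c : V → V → ℕ) (s t : V) :
    BddAbove {n : ℕ | ∃ f : V → V → ℕ, IsFlow c s t f ∧ flowValue f s = (n : ℤ)} := by
  refine ⟨∑ y ∈ univ.erase s, c s y, fun n hn => ?_⟩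
  obtain ⟨f, hf, hv⟩ := hn
  have h1 : (n : ℤ) ≤ ∑ y ∈ univ.erase s, (c s y : ℤ) := by
    rw [← hv]
    unfold flowValue
    have h2 : ∑ y ∈ univ.erase s, (f s y : ℤ) ≤ ∑ y ∈ univ.erase s, (c s y : ℤ) := by
      apply Finset.sum_le_sum
      intro y hy
      exact_mod_cast hf.1 s y (fun h => (mem_erase.mp hy).1 h.symm)
    have h3 : (0:ℤ) ≤ ∑ y ∈ univ.erase s, (f y s : ℤ) := by positivity
    omega
  have h4 : ((∑ y ∈ univ.erase s, c s y : ℕ) : ℤ) = ∑ y ∈ univ.erase s, (c s y : ℤ) := by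
    push_cast; rfl
  exact_mod_cast h1.trans_eq h4.symm

lemma maxFlow_exists (c : V → V → ℕ) (s t : V) :
    ∃ f, IsFlow c s t f ∧ flowValue f s = (maxFlow c s t : ℤ) :=
  Nat.sSup_mem ⟨0, zero_mem_flowSet c s t⟩ (bddAbove_flowSet c s t)

lemma le_maxFlow {c : V → V → ℕ} {s t : V} {f : V → V → ℕ} {m : ℕ}
    (hf : IsFlow c s t f) (h : (m : ℤ) ≤ flowValue f s) : m ≤ maxFlow c s t := by
  have h0 : (0:ℤ) ≤ flowValue f s := le_trans (by positivity) h
  have hmem : (flowValue f s).toNat ∈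
      {n : ℕ | ∃ g : V → V → ℕ, IsFlow c s t g ∧ flowValue g s = (n : ℤ)} :=
    ⟨f, hf, (Int.toNat_of_nonneg h0).symm⟩
  have hm : m ≤ (flowValue f s).toNat := by omega
  exact hm.trans (le_csSup (bddAbove_flowSet c s t) hmem)

end Basic

section SumSwap

lemma sum_erase_eq_sum_ite (G : V → ℤ) (x : V) :
    ∑ y ∈ univ.erase x, G y = ∑ y, if y = x then 0 else G y := by
  rw [← Finset.sum_erase_add univ (fun y => if y = x then 0 else G y) (mem_univ x)]
  rw [if_pos rfl, add_zero]
  exact (Finset.sum_congr rfl (fun y hy => if_neg (mem_erase.mp hy).1)).symm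

lemma sum_out_eq_sum_in (f : V → V → ℕ) :
    ∑ x, ∑ y ∈ univ.erase x, (f x y : ℤ) = ∑ x, ∑ y ∈ univ.erase x, (f y x : ℤ) := by
  have h1 : ∑ x, ∑ y ∈ univ.erase x, (f x y : ℤ)
      = ∑ x, ∑ y, if y = x then 0 else (f x y : ℤ) :=
    Finset.sum_congr rfl (fun x _ => sum_erase_eq_sum_ite _ x)
  have h2 : ∑ x, ∑ y ∈ univ.erase x, (f y x : ℤ)
      = ∑ x, ∑ y, if y = x then 0 else (f y x : ℤ) :=
    Finset.sum_congr rfl (fun x _ => sum_erase_eq_sum_ite _ x)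
  rw [h1, h2, Finset.sum_comm]
  apply Finset.sum_congr rfl; intro x _
  apply Finset.sum_congr rfl; intro y _
  by_cases h : x = y
  · simp [h]
  · rw [if_neg h, if_neg (Ne.symm h)]

lemma flowValue_sink {c : V → V → ℕ} {s t : V} {f : V → V → ℕ}
    (hf : IsFlow c s t f) (hst : s ≠ t) :
    flowValue f s = (∑ y ∈ univ.erase t, (f y t : ℤ)) - ∑ y ∈ univ.erase t, (f t y : ℤ) := by
  set T : V → ℤ := fun x =>
    (∑ y ∈ univ.erase x, (f x y : ℤ)) - ∑ y ∈ univ.erase x, (f y x : ℤ) with hT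
  have htot : ∑ x, T x = 0 := by
    simp only [hT]
    rw [Finset.sum_sub_distrib, sum_out_eq_sum_in]
    exact sub_self _
  have hsub : ∑ x ∈ ({s, t} : Finset V), T x = ∑ x, T x := by
    apply Finset.sum_subset (subset_univ _)
    intro x _ hx
    simp only [mem_insert, mem_singleton] at hx
    push_neg at hx
    have := hf.2 x hx.1 hx.2
    simp only [hT]
    have : (∑ y ∈ univ.erase x, (f x y : ℤ)) = ∑ y ∈ univ.erase x, (f y x : ℤ) := by
      exact_mod_cast congrArg (Nat.cast : ℕ → ℤ) this
    omega
  rw [Finset.sum_pair hst] at hsub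
  rw [htot] at hsub
  have : T s = -(T t) := by omega
  unfold flowValue
  simp only [hT] at this ⊢
  omega

lemma isFlow_swap {c : V → V → ℕ} {s t : V} {f : V → V → ℕ} (hf : IsFlow c s t f) :
    IsFlow (fun a b => c b a) t s (fun a b => f b a) :=
  ⟨fun x y hxy => hf.1 y x (Ne.symm hxy), fun x hx1 hx2 => (hf.2 x hx2 hx1).symm⟩

lemma flowValue_swap {c : V → V → ℕ} {s t : V} {f : V → V → ℕ}
    (hf : IsFlow c s t f) (hst : s ≠ t) :
    flowValue (fun a b => f b a) t = flowValue f s := by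
  rw [flowValue_sink hf hst]
  unfold flowValue
  rfl

lemma maxFlow_swap (c : V → V → ℕ) {s t : V} (hst : s ≠ t) :
    maxFlow (fun a b => c b a) t s = maxFlow c s t := by
  unfold maxFlow
  congr 1
  ext n
  constructor
  · rintro ⟨f, hf, hv⟩
    exact ⟨fun a b => f b a, isFlow_swap hf, (flowValue_swap hf hst.symm).trans hv⟩
  · rintro ⟨f, hf, hv⟩
    exact ⟨fun a b => f b a, isFlow_swap hf, (flowValue_swap hf hst).trans hv⟩

end SumSwap
section Decrement

lemma decrement {c : V → V → ℕ} {s t : V} {f : V → V → ℕ} (hf : IsFlow c s t f)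
    (u : ℕ → V) (L : ℕ) (hL : 1 ≤ L)
    (hpos : ∀ i, i < L → 0 < f (u i) (u (i + 1)))
    (hne : ∀ i, i < L → u i ≠ u (i + 1))
    (hinj : ∀ i, i < L → ∀ j, j < L → u i = u j → i = j)
    (hend : u L = u 0 ∨ (u 0 = t ∧ u L = s ∧ ∀ i, i < L → u i ≠ s)) :
    ∃ g, IsFlow c s t g ∧ flowValue f s ≤ flowValue g s ∧ (∀ a b, g a b ≤ f a b) ∧
      g (u 0) (u 1) < f (u 0) (u 1) := by
  classical
  -- injectivity of the shifted walk
  have hinj1 : ∀ i, i < L → ∀ j, j < L → u (i + 1) = u (j + 1) → i = j := by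
    intro i hi j hj hij
    rcases eq_or_lt_of_le (Nat.succ_le_of_lt hi) with hiL | hiL <;>
      rcases eq_or_lt_of_le (Nat.succ_le_of_lt hj) with hjL | hjL
    · omega
    · exfalso
      have hiL' : i + 1 = L := hiL
      rw [hiL'] at hij
      rcases hend with h | ⟨_, hLs, hnos⟩
      · rw [h] at hij
        have := hinj 0 hL (j+1) hjL hij
        omega
      · rw [hLs] at hij
        exact hnos (j+1) hjL hij.symm
    · exfalso
      have hjL' : j + 1 = L := hjL
      rw [hjL'] at hij
      rcases hend with h | ⟨_, hLs, hnos⟩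
      · rw [h] at hij
        have := hinj (i+1) hiL 0 hL hij
        omega
      · rw [hLs] at hij
        exact hnos (i+1) hiL hij
    · have := hinj (i+1) hiL (j+1) hjL hij
      omega
  set d : V → V → ℕ :=
    fun a b => if ∃ i, i < L ∧ u i = a ∧ u (i + 1) = b then 1 else 0 with hd
  have hdle : ∀ a b, d a b ≤ f a b := by
    intro a b
    simp only [hd]
    split
    · next h =>
      obtain ⟨i, hi, ha, hb⟩ := h
      rw [← ha, ← hb]
      exact hpos i hi
    · exact Nat.zero_le _
  have houtd : ∀ x, ∑ y ∈ univ.erase x, d x y = if ∃ i, i < L ∧ u i = x then 1 else 0 := by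
    intro x
    by_cases hx : ∃ i, i < L ∧ u i = x
    · obtain ⟨i, hi, hix⟩ := hx
      have hstep : ∀ y ∈ univ.erase x, d x y = if y = u (i + 1) then 1 else 0 := by
        intro y _
        by_cases hyu : y = u (i + 1)
        · subst hyu
          rw [if_pos rfl]
          simp only [hd]
          exact if_pos ⟨i, hi, hix, rfl⟩
        · rw [if_neg hyu]
          simp only [hd]
          apply if_neg
          rintro ⟨j, hj, hjx, hjy⟩
          exact hyu (by rw [← hjy, hinj j hj i hi (hjx.trans hix.symm)])
      rw [Finset.sum_congr rfl hstep, Finset.sum_ite_eq' (univ.erase x) (u (i+1)) (fun _ => 1)]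
      rw [if_pos (mem_erase.mpr ⟨by rw [← hix]; exact (hne i hi).symm, mem_univ _⟩)]
      rw [if_pos ⟨i, hi, hix⟩]
    · rw [if_neg hx]
      apply Finset.sum_eq_zero
      intro y _
      simp only [hd]
      apply if_neg
      rintro ⟨j, hj, hjx, hjy⟩
      exact hx ⟨j, hj, hjx⟩
  have hind : ∀ x, ∑ y ∈ univ.erase x, d y x = if ∃ i, i < L ∧ u (i + 1) = x then 1 else 0 := by
    intro x
    by_cases hx : ∃ i, i < L ∧ u (i + 1) = x
    · obtain ⟨i, hi, hix⟩ := hx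
      have hstep : ∀ y ∈ univ.erase x, d y x = if y = u i then 1 else 0 := by
        intro y _
        by_cases hyu : y = u i
        · subst hyu
          rw [if_pos rfl]
          simp only [hd]
          exact if_pos ⟨i, hi, rfl, hix⟩
        · rw [if_neg hyu]
          simp only [hd]
          apply if_neg
          rintro ⟨j, hj, hjx, hjy⟩
          exact hyu (by rw [← hjx, hinj1 j hj i hi (hjy.trans hix.symm)])
      rw [Finset.sum_congr rfl hstep, Finset.sum_ite_eq' (univ.erase x) (u i) (fun _ => 1)]
      rw [if_pos (mem_erase.mpr ⟨by rw [← hix]; exact hne i hi, mem_univ _⟩)]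
      rw [if_pos ⟨i, hi, hix⟩]
    · rw [if_neg hx]
      apply Finset.sum_eq_zero
      intro y _
      simp only [hd]
      apply if_neg
      rintro ⟨j, hj, hjx, hjy⟩
      exact hx ⟨j, hj, hjy⟩
  refine ⟨fun a b => f a b - d a b, ⟨?_, ?_⟩, ?_, ?_, ?_⟩
  · intro x y hxy
    exact le_trans (Nat.sub_le _ _) (hf.1 x y hxy)
  · -- conservation
    intro x hxs hxt
    have hto : ∑ y ∈ univ.erase x, (f x y - d x y)
        = ∑ y ∈ univ.erase x, f x y - ∑ y ∈ univ.erase x, d x y :=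
      Finset.sum_tsub_distrib _ (fun y _ => hdle x y)
    have hti : ∑ y ∈ univ.erase x, (f y x - d y x)
        = ∑ y ∈ univ.erase x, f y x - ∑ y ∈ univ.erase x, d y x :=
      Finset.sum_tsub_distrib _ (fun y _ => hdle y x)
    rw [hto, hti, houtd, hind, hf.2 x hxs hxt]
    congr 1
    -- the membership iff
    have hiff : (∃ i, i < L ∧ u i = x) ↔ (∃ i, i < L ∧ u (i + 1) = x) := by
      rcases hend with hcl | ⟨h0t, hLs, hnos⟩
      · constructor
        · rintro ⟨i, hi, hix⟩
          rcases Nat.eq_zero_or_pos i with rfl | hipos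
          · exact ⟨L - 1, by omega, by rw [Nat.sub_add_cancel hL, hcl]; exact hix⟩
          · exact ⟨i - 1, by omega, by rw [Nat.sub_add_cancel hipos]; exact hix⟩
        · rintro ⟨i, hi, hix⟩
          rcases eq_or_lt_of_le (Nat.succ_le_of_lt hi) with hiL | hiL
          · exact ⟨0, hL, by rw [← hcl, ← hiL]; exact hix⟩
          · exact ⟨i + 1, hiL, hix⟩
      · constructor
        · rintro ⟨i, hi, hix⟩
          have hi0 : i ≠ 0 := by
            rintro rfl
            exact hxt (hix.symm.trans h0t)
          exact ⟨i - 1, by omega, by rw [Nat.sub_add_cancel (Nat.pos_of_ne_zero hi0)]; exact hix⟩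
        · rintro ⟨i, hi, hix⟩
          have hiL : i + 1 ≠ L := by
            rintro rfl
            exact hxs (hix.symm.trans hLs)
          exact ⟨i + 1, by omega, hix⟩
    by_cases h : ∃ i, i < L ∧ u i = x
    · rw [if_pos h, if_pos (hiff.mp h)]
    · rw [if_neg h, if_neg (fun h' => h (hiff.mpr h'))]
  · -- flowValue increases (weakly)
    have hto : ∑ y ∈ univ.erase s, (f s y - d s y)
        = ∑ y ∈ univ.erase s, f s y - ∑ y ∈ univ.erase s, d s y :=
      Finset.sum_tsub_distrib _ (fun y _ => hdle s y)
    have hti : ∑ y ∈ univ.erase s, (f y s - d y s)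
        = ∑ y ∈ univ.erase s, f y s - ∑ y ∈ univ.erase s, d y s :=
      Finset.sum_tsub_distrib _ (fun y _ => hdle y s)
    have hdo : ∑ y ∈ univ.erase s, d s y ≤ ∑ y ∈ univ.erase s, f s y :=
      Finset.sum_le_sum (fun y _ => hdle s y)
    have hdi : ∑ y ∈ univ.erase s, d y s ≤ ∑ y ∈ univ.erase s, f y s :=
      Finset.sum_le_sum (fun y _ => hdle y s)
    have hkey : ∑ y ∈ univ.erase s, d s y ≤ ∑ y ∈ univ.erase s, d y s := by
      rw [houtd, hind]
      rcases hend with hcl | ⟨h0t, hLs, hnos⟩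
      · -- closed walk: equality of the indicators
        by_cases h : ∃ i, i < L ∧ u i = s
        · rw [if_pos h]
          obtain ⟨i, hi, hix⟩ := h
          rcases Nat.eq_zero_or_pos i with rfl | hipos
          · rw [if_pos ⟨L - 1, by omega, by rw [Nat.sub_add_cancel hL, hcl]; exact hix⟩]
          · rw [if_pos ⟨i - 1, by omega, by rw [Nat.sub_add_cancel hipos]; exact hix⟩]
        · rw [if_neg h]
          exact Nat.zero_le _
      · rw [if_neg (by rintro ⟨i, hi, his⟩; exact hnos i hi his)]
        exact Nat.zero_le _
    have E1 : ∑ y ∈ univ.erase s, ((f s y - d s y : ℕ) : ℤ)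
        = (∑ y ∈ univ.erase s, (f s y : ℤ)) - ∑ y ∈ univ.erase s, (d s y : ℤ) := by
      rw [← Nat.cast_sum, hto, Int.ofNat_sub hdo]
      push_cast
      rfl
    have E2 : ∑ y ∈ univ.erase s, ((f y s - d y s : ℕ) : ℤ)
        = (∑ y ∈ univ.erase s, (f y s : ℤ)) - ∑ y ∈ univ.erase s, (d y s : ℤ) := by
      rw [← Nat.cast_sum, hti, Int.ofNat_sub hdi]
      push_cast
      rfl
    have hkZ : (∑ y ∈ univ.erase s, (d s y : ℤ)) ≤ ∑ y ∈ univ.erase s, (d y s : ℤ) := by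
      push_cast at hkey ⊢
      exact_mod_cast hkey
    simp only [flowValue]
    rw [E1, E2]
    linarith
  · exact fun a b => Nat.sub_le _ _
  · have h1 : d (u 0) (u 1) = 1 := by
      simp only [hd]
      exact if_pos ⟨0, hL, rfl, rfl⟩
    have h2 : 0 < f (u 0) (u 1) := hpos 0 hL
    show f (u 0) (u 1) - d (u 0) (u 1) < f (u 0) (u 1)
    omega

end Decrement
section Walk

lemma exists_walk {c : V → V → ℕ} {s t : V} {f : V → V → ℕ} (hf : IsFlow c s t f)
    (hst : s ≠ t) (z : V) (hz : z ≠ s) (hzs : 0 < f z s) :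
    ∃ g, IsFlow c s t g ∧ flowValue f s ≤ flowValue g s ∧
      ∑ x, ∑ y, g x y < ∑ x, ∑ y, f x y := by
  classical
  -- predecessor choice
  have hstep : ∀ x : V, ∃ p : V,
      (x ≠ s → x ≠ t → 0 < ∑ y ∈ univ.erase x, f x y → p ≠ x ∧ 0 < f p x) := by
    intro x
    by_cases hx : ∃ p, p ≠ x ∧ 0 < f p x
    · exact ⟨hx.choose, fun _ _ _ => hx.choose_spec⟩
    · refine ⟨x, fun hxs hxt hpos => absurd ?_ hx⟩
      have hcons := hf.2 x hxs hxt
      rw [hcons] at hpos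
      by_contra hcon
      push_neg at hcon
      have : ∑ y ∈ univ.erase x, f y x = 0 := by
        apply Finset.sum_eq_zero
        intro y hy
        have := hcon y (mem_erase.mp hy).1
        omega
      omega
  choose pred hpred using hstep
  set v : ℕ → V := fun n => Nat.rec z (fun _ x => pred x) n with hv
  have hv0 : v 0 = z := rfl
  have hvs : ∀ n, v (n + 1) = pred (v n) := fun n => rfl
  -- the key invariant
  have key : ∀ n, (∀ m, m ≤ n → v m ≠ s ∧ v m ≠ t) →
      (0 < ∑ y ∈ univ.erase (v n), f (v n) y) ∧ 0 < f (v (n + 1)) (v n) ∧ v (n + 1) ≠ v n := by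
    intro n
    induction n with
    | zero =>
      intro h
      have hout : 0 < ∑ y ∈ univ.erase (v 0), f (v 0) y := by
        have hmem : s ∈ univ.erase (v 0) := by
          rw [hv0]; exact mem_erase.mpr ⟨hz.symm, mem_univ _⟩
        calc 0 < f z s := hzs
          _ = f (v 0) s := by rw [hv0]
          _ ≤ ∑ y ∈ univ.erase (v 0), f (v 0) y :=
            Finset.single_le_sum (fun y _ => Nat.zero_le _) hmem
      obtain ⟨hp1, hp2⟩ := hpred (v 0) (h 0 le_rfl).1 (h 0 le_rfl).2 hout
      exact ⟨hout, by rw [hvs 0]; exact hp2, by rw [hvs 0]; exact hp1⟩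
    | succ n ih =>
      intro h
      obtain ⟨_, hpos, hne⟩ := ih (fun m hm => h m (hm.trans (Nat.le_succ n)))
      have hout : 0 < ∑ y ∈ univ.erase (v (n + 1)), f (v (n + 1)) y := by
        have hmem : v n ∈ univ.erase (v (n + 1)) := mem_erase.mpr ⟨Ne.symm hne, mem_univ _⟩
        calc 0 < f (v (n + 1)) (v n) := hpos
          _ ≤ ∑ y ∈ univ.erase (v (n + 1)), f (v (n + 1)) y :=
            Finset.single_le_sum (fun y _ => Nat.zero_le _) hmem
      obtain ⟨hp1, hp2⟩ := hpred (v (n + 1)) (h (n + 1) le_rfl).1 (h (n + 1) le_rfl).2 hout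
      exact ⟨hout, by rw [hvs (n + 1)]; exact hp2, by rw [hvs (n + 1)]; exact hp1⟩
  -- find the first repeat / terminal
  have hPex : ∃ n, v n = s ∨ v n = t ∨ ∃ m, m < n ∧ v m = v n := by
    obtain ⟨i, j, hij, heq⟩ := Fintype.exists_ne_map_eq_of_card_lt
      (fun i : Fin (Fintype.card V + 1) => v i) (by simp)
    rcases Ne.lt_or_gt hij with h | h
    · exact ⟨j, Or.inr (Or.inr ⟨i, h, heq⟩)⟩
    · exact ⟨i, Or.inr (Or.inr ⟨j, h, heq.symm⟩)⟩
  set N := Nat.find hPex with hN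
  have hPN : v N = s ∨ v N = t ∨ ∃ m, m < N ∧ v m = v N := Nat.find_spec hPex
  have hmin : ∀ m, m < N → v m ≠ s ∧ v m ≠ t ∧ ∀ k, k < m → v k ≠ v m := by
    intro m hm
    have := Nat.find_min hPex hm
    push_neg at this
    exact ⟨this.1, this.2.1, fun k hk => this.2.2 k hk⟩
  have hgood : ∀ m, m < N → v m ≠ s ∧ v m ≠ t := fun m hm => ⟨(hmin m hm).1, (hmin m hm).2.1⟩
  have harc : ∀ n, n < N → 0 < f (v (n + 1)) (v n) ∧ v (n + 1) ≠ v n := by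
    intro n hn
    have := key n (fun m hm => hgood m (lt_of_le_of_lt hm hn))
    exact ⟨this.2.1, this.2.2⟩
  have hvinjlt : ∀ i, i < N → ∀ j, j < N → v i = v j → i = j := by
    intro i hi j hj hij
    rcases lt_trichotomy i j with h | h | h
    · exact absurd hij ((hmin j hj).2.2 i h)
    · exact h
    · exact absurd hij.symm ((hmin i hi).2.2 j h)
  -- helper to build a decrement from a closed/terminal walk
  rcases hPN with hNs | hNt | ⟨m, hm, hmN⟩
  · -- case A : v N = s ; closed cycle through s, length N+1
    have hN1 : 1 ≤ N := by
      rcases Nat.eq_zero_or_pos N with h | h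
      · exact absurd (h ▸ hNs) (hv0 ▸ hz)
      · exact h
    set u : ℕ → V := fun i => if i = N + 1 then s else v (N - i) with hu
    have hule : ∀ i, i ≤ N → u i = v (N - i) := by
      intro i hi; simp only [hu]; rw [if_neg (by omega)]
    have huL : u (N + 1) = s := by simp [hu]
    have hvinjN : ∀ i, i ≤ N → ∀ j, j ≤ N → v i = v j → i = j := by
      intro i hi j hj hij
      rcases eq_or_lt_of_le hi with rfl | hi' <;> rcases eq_or_lt_of_le hj with rfl | hj'
      · rfl
      · exact absurd (hij.symm.trans hNs) (hgood j hj').1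
      · exact absurd (hij.trans hNs) (hgood i hi').1
      · exact hvinjlt i hi' j hj' hij
    obtain ⟨g, hg1, hg2, hg3, hg4⟩ := decrement hf u (N + 1) (by omega)
      (by
        intro i hi
        rcases eq_or_lt_of_le (Nat.lt_succ_iff.mp hi) with rfl | hi'
        · rw [hule N le_rfl, huL, Nat.sub_self, hv0]; exact hzs
        · rw [hule i (by omega), hule (i + 1) (by omega)]
          have h := (harc (N - i - 1) (by omega)).1
          have e1 : N - i - 1 + 1 = N - i := by omega
          have e2 : N - (i + 1) = N - i - 1 := by omega
          rw [e1] at h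
          rw [e2]
          exact h)
      (by
        intro i hi
        rcases eq_or_lt_of_le (Nat.lt_succ_iff.mp hi) with rfl | hi'
        · rw [hule N le_rfl, huL, Nat.sub_self, hv0]; exact hz
        · rw [hule i (by omega), hule (i + 1) (by omega)]
          have h := (harc (N - i - 1) (by omega)).2
          have e1 : N - i - 1 + 1 = N - i := by omega
          have e2 : N - (i + 1) = N - i - 1 := by omega
          rw [e1] at h
          rw [e2]
          exact fun hc => h hc)
      (by
        intro i hi j hj hij
        rw [hule i (by omega), hule j (by omega)] at hij
        have := hvinjN (N - i) (by omega) (N - j) (by omega) hij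
        omega)
      (by
        left
        rw [huL, hule 0 (by omega), Nat.sub_zero, hNs])
    refine ⟨g, hg1, hg2, ?_⟩
    apply Finset.sum_lt_sum (fun x _ => Finset.sum_le_sum (fun y _ => hg3 x y))
    refine ⟨u 0, mem_univ _, ?_⟩
    apply Finset.sum_lt_sum (fun y _ => hg3 (u 0) y)
    exact ⟨u 1, mem_univ _, hg4⟩
  · -- case B : v N = t ; path from t to s, length N+1
    set u : ℕ → V := fun i => if i = N + 1 then s else v (N - i) with hu
    have hule : ∀ i, i ≤ N → u i = v (N - i) := by
      intro i hi; simp only [hu]; rw [if_neg (by omega)]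
    have huL : u (N + 1) = s := by simp [hu]
    have hvinjN : ∀ i, i ≤ N → ∀ j, j ≤ N → v i = v j → i = j := by
      intro i hi j hj hij
      rcases eq_or_lt_of_le hi with rfl | hi' <;> rcases eq_or_lt_of_le hj with rfl | hj'
      · rfl
      · exact absurd (hij.symm.trans hNt) (hgood j hj').2
      · exact absurd (hij.trans hNt) (hgood i hi').2
      · exact hvinjlt i hi' j hj' hij
    obtain ⟨g, hg1, hg2, hg3, hg4⟩ := decrement hf u (N + 1) (by omega)
      (by
        intro i hi
        rcases eq_or_lt_of_le (Nat.lt_succ_iff.mp hi) with rfl | hi'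
        · rw [hule N le_rfl, huL, Nat.sub_self, hv0]; exact hzs
        · rw [hule i (by omega), hule (i + 1) (by omega)]
          have h := (harc (N - i - 1) (by omega)).1
          have e1 : N - i - 1 + 1 = N - i := by omega
          have e2 : N - (i + 1) = N - i - 1 := by omega
          rw [e1] at h
          rw [e2]
          exact h)
      (by
        intro i hi
        rcases eq_or_lt_of_le (Nat.lt_succ_iff.mp hi) with rfl | hi'
        · rw [hule N le_rfl, huL, Nat.sub_self, hv0]; exact hz
        · rw [hule i (by omega), hule (i + 1) (by omega)]
          have h := (harc (N - i - 1) (by omega)).2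
          have e1 : N - i - 1 + 1 = N - i := by omega
          have e2 : N - (i + 1) = N - i - 1 := by omega
          rw [e1] at h
          rw [e2]
          exact fun hc => h hc)
      (by
        intro i hi j hj hij
        rw [hule i (by omega), hule j (by omega)] at hij
        have := hvinjN (N - i) (by omega) (N - j) (by omega) hij
        omega)
      (by
        right
        refine ⟨by rw [hule 0 (by omega), Nat.sub_zero]; exact hNt, huL, ?_⟩
        intro i hi
        rcases Nat.eq_zero_or_pos i with rfl | hi0
        · rw [hule 0 (by omega), Nat.sub_zero, hNt]
          exact fun h => hst h.symm
        · rw [hule i (by omega)]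
          exact (hgood (N - i) (by omega)).1)
    refine ⟨g, hg1, hg2, ?_⟩
    apply Finset.sum_lt_sum (fun x _ => Finset.sum_le_sum (fun y _ => hg3 x y))
    refine ⟨u 0, mem_univ _, ?_⟩
    apply Finset.sum_lt_sum (fun y _ => hg3 (u 0) y)
    exact ⟨u 1, mem_univ _, hg4⟩
  · -- case C : cycle v m = v N, not through s or t
    set u : ℕ → V := fun i => v (N - i) with hu
    set L := N - m with hLdef
    have hL1 : 1 ≤ L := by omega
    obtain ⟨g, hg1, hg2, hg3, hg4⟩ := decrement hf u L hL1
      (by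
        intro i hi
        simp only [hu]
        have h := (harc (N - i - 1) (by omega)).1
        have e1 : N - i - 1 + 1 = N - i := by omega
        have e2 : N - (i + 1) = N - i - 1 := by omega
        rw [e1] at h
        rw [e2]
        exact h)
      (by
        intro i hi
        simp only [hu]
        have h := (harc (N - i - 1) (by omega)).2
        have e1 : N - i - 1 + 1 = N - i := by omega
        have e2 : N - (i + 1) = N - i - 1 := by omega
        rw [e1] at h
        rw [e2]
        exact fun hc => h hc)
      (by
        intro i hi j hj hij
        simp only [hu] at hij
        -- indices N-i, N-j ∈ (m, N]
        rcases Nat.eq_zero_or_pos i with rfl | hi0 <;> rcases Nat.eq_zero_or_pos j with rfl | hj0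
        · rfl
        · exfalso
          rw [Nat.sub_zero] at hij
          have : v m = v (N - j) := hmN.trans hij
          exact ((hmin (N - j) (by omega)).2.2 m (by omega)) this
        · exfalso
          rw [Nat.sub_zero] at hij
          have : v m = v (N - i) := hmN.trans hij.symm
          exact ((hmin (N - i) (by omega)).2.2 m (by omega)) this
        · have := hvinjlt (N - i) (by omega) (N - j) (by omega) hij
          omega)
      (by
        left
        simp only [hu]
        have e : N - L = m := by omega
        rw [e, Nat.sub_zero, hmN])
    refine ⟨g, hg1, hg2, ?_⟩
    apply Finset.sum_lt_sum (fun x _ => Finset.sum_le_sum (fun y _ => hg3 x y))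
    refine ⟨u 0, mem_univ _, ?_⟩
    apply Finset.sum_lt_sum (fun y _ => hg3 (u 0) y)
    exact ⟨u 1, mem_univ _, hg4⟩

end Walk
section Clean

lemma exists_clean {c : V → V → ℕ} {s t : V} (hst : s ≠ t) :
    ∀ (N : ℕ) (f : V → V → ℕ), IsFlow c s t f → (∑ x, ∑ y, f x y) ≤ N →
    ∃ g, IsFlow c s t g ∧ flowValue f s ≤ flowValue g s ∧ ∀ y, y ≠ s → g y s = 0 := by
  intro N
  induction N with
  | zero =>
    intro f hf hsum
    refine ⟨f, hf, le_rfl, ?_⟩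
    intro y hy
    have h1 : f y s ≤ ∑ x, ∑ y', f x y' := by
      calc f y s ≤ ∑ y', f y y' := Finset.single_le_sum (fun _ _ => Nat.zero_le _) (mem_univ s)
        _ ≤ ∑ x, ∑ y', f x y' :=
          Finset.single_le_sum (f := fun x => ∑ y', f x y') (fun _ _ => Nat.zero_le _)
            (mem_univ y)
    omega
  | succ N ih =>
    intro f hf hsum
    by_cases hcl : ∀ y, y ≠ s → f y s = 0
    · exact ⟨f, hf, le_rfl, hcl⟩
    · push_neg at hcl
      obtain ⟨z, hz, hzs⟩ := hcl
      obtain ⟨g, hg1, hg2, hg3⟩ := exists_walk hf hst z hz (Nat.pos_of_ne_zero hzs)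
      obtain ⟨g', hg'1, hg'2, hg'3⟩ := ih g hg1 (by omega)
      exact ⟨g', hg'1, hg2.trans hg'2, hg'3⟩

lemma exists_max_clean {c : V → V → ℕ} {s t : V} (hst : s ≠ t) :
    ∃ g, IsFlow c s t g ∧ (maxFlow c s t : ℤ) ≤ flowValue g s ∧ ∀ y, y ≠ s → g y s = 0 := by
  obtain ⟨f, hf, hv⟩ := maxFlow_exists c s t
  obtain ⟨g, hg1, hg2, hg3⟩ := exists_clean hst (∑ x, ∑ y, f x y) f hf le_rfl
  exact ⟨g, hg1, hv ▸ hg2, hg3⟩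

end Clean


/-- Key one-sided lemma: if out-arcs of `x'` only grow, and arcs not touching
`x'` are unchanged, the max flow out of `x'` grows at least by the increase
on the arc `(x', y)`. -/
lemma maxFlow_grow (c₁ c₂ : V → V → ℕ) (x' y : V) (hyx : y ≠ x')
    (h1 : ∀ b, b ≠ x' → c₁ x' b ≤ c₂ x' b)
    (h2 : ∀ a b, a ≠ b → a ≠ x' → b ≠ x' → c₂ a b = c₁ a b) :
    maxFlow c₁ x' y + (c₂ x' y - c₁ x' y) ≤ maxFlow c₂ x' y := by
  classical
  obtain ⟨g, hg1, hg2, hg3⟩ := exists_max_clean (c := c₁) (s := x') (t := y) (Ne.symm hyx)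
  set δ := c₂ x' y - c₁ x' y with hδ
  set h : V → V → ℕ := fun a b => if a = x' ∧ b = y then g x' y + δ else g a b with hh
  have hhspec : ∀ a b, ¬(a = x' ∧ b = y) → h a b = g a b := by
    intro a b hab; simp only [hh]; rw [if_neg hab]
  have hflow : IsFlow c₂ x' y h := by
    constructor
    · intro a b hab
      by_cases hc : a = x' ∧ b = y
      · have e : h a b = g x' y + δ := by
          simp only [hh]
          rw [if_pos hc]
        rw [e, hc.1, hc.2]
        have := hg1.1 x' y (Ne.symm hyx)
        have hle := h1 y hyx
        omega
      · rw [hhspec a b hc]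
        by_cases hax : a = x'
        · rw [hax] at hab ⊢
          exact (hg1.1 x' b hab).trans (h1 b (Ne.symm hab))
        · by_cases hbx : b = x'
          · rw [hbx] at hab ⊢
            rw [hg3 a hax]
            exact Nat.zero_le _
          · rw [h2 a b hab hax hbx]
            exact hg1.1 a b hab
    · intro w hw1 hw2
      have ho : ∀ b ∈ univ.erase w, h w b = g w b :=
        fun b _ => hhspec w b (fun hc => hw1 hc.1)
      have hi : ∀ b ∈ univ.erase w, h b w = g b w :=
        fun b _ => hhspec b w (fun hc => hw2 hc.2)
      rw [Finset.sum_congr rfl ho, Finset.sum_congr rfl hi]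
      exact hg1.2 w hw1 hw2
  have hval : flowValue h x' = flowValue g x' + δ := by
    unfold flowValue
    have ho : ∀ b ∈ univ.erase x', (h x' b : ℤ)
        = (g x' b : ℤ) + (if b = y then (δ : ℤ) else 0) := by
      intro b _
      by_cases hb : b = y
      · rw [hb]
        have e : h x' y = g x' y + δ := by simp [hh]
        rw [e, if_pos rfl]
        push_cast
        ring
      · rw [hhspec x' b (fun hc => hb hc.2), if_neg hb, add_zero]
    have hi : ∀ b ∈ univ.erase x', (h b x' : ℤ) = (g b x' : ℤ) := by
      intro b hb
      rw [hhspec b x' (fun hc => (mem_erase.mp hb).1 hc.1)]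
    rw [Finset.sum_congr rfl ho, Finset.sum_congr rfl hi, Finset.sum_add_distrib]
    rw [Finset.sum_ite_eq' (univ.erase x') y (fun _ => (δ : ℤ))]
    rw [if_pos (mem_erase.mpr ⟨hyx, mem_univ _⟩)]
    ring
  apply le_maxFlow hflow
  rw [hval]
  push_cast
  omega

end Aux

/-- Monotonicity: improving the results of `x*` (and changing nothing else)
preserves, and under strictness improves, the flow comparisons of `x*` with
other vertices. -/
theorem stmt10 {V : Type*} [Fintype V] [DecidableEq V]
    (hV : 2 ≤ Fintype.card V) (c c' : V → V → ℕ) (x' : V)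
    (ha : ∀ y : V, y ≠ x' → c x' y ≤ c' x' y ∧ c' y x' ≤ c y x')
    (hb : ∀ x y : V, x ≠ y → x ≠ x' → y ≠ x' → c' x y = c x y) :
    (∀ y : V, y ≠ x' → maxFlow c y x' ≤ maxFlow c x' y →
      maxFlow c' y x' ≤ maxFlow c' x' y) ∧
    (∀ y : V, y ≠ x' → maxFlow c y x' ≤ maxFlow c x' y →
      (maxFlow c y x' < maxFlow c x' y ∨ c x' y < c' x' y ∨
        c' y x' < c y x') →
      maxFlow c' y x' < maxFlow c' x' y) := by
  have key : ∀ y : V, y ≠ x' →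
      (maxFlow c x' y + (c' x' y - c x' y) ≤ maxFlow c' x' y) ∧
      (maxFlow c' y x' + (c y x' - c' y x') ≤ maxFlow c y x') := by
    intro y hy
    constructor
    · exact maxFlow_grow c c' x' y hy (fun b hb' => (ha b hb').1) hb
    · -- reverse direction via swapped networks
      have hgrow := maxFlow_grow (fun a b => c' b a) (fun a b => c b a) x' y hy
        (fun b hb' => (ha b hb').2)
        (fun a b hab hax hbx => (hb b a (Ne.symm hab) hbx hax).symm)
      rw [maxFlow_swap c' hy, maxFlow_swap c hy] at hgrow
      exact hgrow
  constructor
  · intro y hy hle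
    obtain ⟨k1, k2⟩ := key y hy
    omega
  · intro y hy hle hstrict
    obtain ⟨k1, k2⟩ := key y hy
    omega
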